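/- Let Z be a nonempty finite type, let π : Z → ℝ be a probability mass function (the prior P(z)), let q : Z → ℝ be a probability mass function (the approximate posterior Q(z|x)), let r : Z → ℝ satisfy r z > 0 for all z (the conditional likelihood P(x|z)), and let g : Z → ℝ satisfy g z > 0 for all z (the conditional tree probability P(T|z)). Then log ((∑ z, π z * r z) * (∑ z, q z * g z)) ≥ (∑ z, q z * log (r z)) - KL(q‖π) + (∑ z, q z * log (g z)). (This is the full LAP lemma for a labeled example: the objective J = log(P(x) · P(T|x)) is bounded below by the LAP evidence lower bound J_lap.) -/
import Mathlib


open scoped BigOperators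

lemma elbo_aux {Z : Type*} [Fintype Z] [Nonempty Z]
    (q a : Z → ℝ) (hqpos : ∀ z, 0 < q z) (hqsum : ∑ z, q z = 1)
    (hapos : ∀ z, 0 < a z) :
    ∑ z, q z * Real.log (a z / q z) ≤ Real.log (∑ z, a z) := by
  have hS : 0 < ∑ z, a z := Finset.sum_pos (fun z _ => hapos z) Finset.univ_nonempty
  set S := ∑ z, a z with hSdef
  have key : ∀ z, q z * Real.log (a z / q z) ≤ q z * Real.log S + (a z / S - q z) := by
    intro z
    have hpos : 0 < a z / (q z * S) :=
      div_pos (hapos z) (mul_pos (hqpos z) hS)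
    have hlog : Real.log (a z / (q z * S)) ≤ a z / (q z * S) - 1 :=
      Real.log_le_sub_one_of_pos hpos
    have h1 : Real.log (a z / q z) = Real.log (a z / (q z * S)) + Real.log S := by
      rw [← div_div, Real.log_div (ne_of_gt (div_pos (hapos z) (hqpos z))) (ne_of_gt hS)]
      ring
    rw [h1, mul_add]
    have h2 : q z * Real.log (a z / (q z * S)) ≤ q z * (a z / (q z * S) - 1) :=
      mul_le_mul_of_nonneg_left hlog (le_of_lt (hqpos z))
    have h3 : q z * (a z / (q z * S) - 1) = a z / S - q z := by
      rw [mul_sub, mul_one, mul_div_assoc', mul_div_mul_left _ _ (ne_of_gt (hqpos z))]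
    linarith [h3 ▸ h2]
  calc ∑ z, q z * Real.log (a z / q z)
      ≤ ∑ z, (q z * Real.log S + (a z / S - q z)) :=
        Finset.sum_le_sum (fun z _ => key z)
    _ = (∑ z, q z) * Real.log S + ((∑ z, a z) / S - ∑ z, q z) := by
        rw [Finset.sum_add_distrib, Finset.sum_sub_distrib, ← Finset.sum_mul,
          ← Finset.sum_div]
    _ = Real.log S := by
        rw [hqsum, ← hSdef, div_self (ne_of_gt hS)]; ring

/-- Full LAP lemma for a labeled example: the objective
`J = log (P(x) * P(T|x))` with `P(x) = ∑ z, π z * r z` and `P(T|x) = ∑ z, q z * g z`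
is bounded below by the LAP evidence lower bound `J_lap`. -/
theorem lap_elbo_full {Z : Type*} [Fintype Z] [Nonempty Z]
    (π q r g : Z → ℝ)
    (hπpos : ∀ z, 0 < π z) (hπsum : ∑ z, π z = 1)
    (hqpos : ∀ z, 0 < q z) (hqsum : ∑ z, q z = 1)
    (hrpos : ∀ z, 0 < r z) (hgpos : ∀ z, 0 < g z) :
    (∑ z, q z * Real.log (r z)) - (∑ z, q z * Real.log (q z / π z))
        + (∑ z, q z * Real.log (g z))
      ≤ Real.log ((∑ z, π z * r z) * (∑ z, q z * g z)) := by
  have h1 : ∑ z, q z * Real.log ((π z * r z) / q z) ≤ Real.log (∑ z, π z * r z) :=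
    elbo_aux q (fun z => π z * r z) hqpos hqsum (fun z => mul_pos (hπpos z) (hrpos z))
  have h2 : ∑ z, q z * Real.log ((q z * g z) / q z) ≤ Real.log (∑ z, q z * g z) :=
    elbo_aux q (fun z => q z * g z) hqpos hqsum (fun z => mul_pos (hqpos z) (hgpos z))
  have e1 : ∑ z, q z * Real.log ((π z * r z) / q z)
      = (∑ z, q z * Real.log (r z)) - (∑ z, q z * Real.log (q z / π z)) := by
    rw [← Finset.sum_sub_distrib]
    refine Finset.sum_congr rfl (fun z _ => ?_)
    rw [Real.log_div (ne_of_gt (mul_pos (hπpos z) (hrpos z))) (ne_of_gt (hqpos z)),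
      Real.log_mul (ne_of_gt (hπpos z)) (ne_of_gt (hrpos z)),
      Real.log_div (ne_of_gt (hqpos z)) (ne_of_gt (hπpos z))]
    ring
  have e2 : ∑ z, q z * Real.log ((q z * g z) / q z) = ∑ z, q z * Real.log (g z) := by
    refine Finset.sum_congr rfl (fun z _ => ?_)
    rw [mul_div_cancel_left₀ _ (ne_of_gt (hqpos z))]
  have hP : 0 < ∑ z, π z * r z :=
    Finset.sum_pos (fun z _ => mul_pos (hπpos z) (hrpos z)) Finset.univ_nonempty
  have hT : 0 < ∑ z, q z * g z :=
    Finset.sum_pos (fun z _ => mul_pos (hqpos z) (hgpos z)) Finset.univ_nonempty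
  rw [Real.log_mul (ne_of_gt hP) (ne_of_gt hT)]
  linarith [e1 ▸ h1, e2 ▸ h2]
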